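/- Let G be a finite simple graph with χ(G) > ω(G) and stability number α(G) = 2. Then for any integers s, t ≥ 2 with s + t = χ(G) + 1, there is a partition (S, T) of V(G) such that χ(G|S) ≥ s and χ(G|T) ≥ t. -/

import Mathlib

open SimpleGraph Finset

set_option linter.unusedSectionVars false
set_option linter.unnecessarySimpa false

namespace ELT

variable {V : Type*} [Fintype V] [DecidableEq V] (H : SimpleGraph V)

/-- support of a pair set -/
def supp (M : Finset (V × V)) : Finset V := M.biUnion (fun p => {p.1, p.2})

lemma mem_supp {M : Finset (V × V)} {x : V} :
    x ∈ supp M ↔ ∃ p ∈ M, x = p.1 ∨ x = p.2 := by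
  simp [supp, mem_biUnion, mem_insert, mem_singleton]

/-- A pairing on `A`: disjoint `H`-edges inside `A`. -/
def IsPairing (A : Finset V) (M : Finset (V × V)) : Prop :=
  (∀ p ∈ M, p.1 ∈ A ∧ p.2 ∈ A ∧ H.Adj p.1 p.2) ∧
  (∀ p ∈ M, ∀ q ∈ M, p ≠ q → p.1 ≠ q.1 ∧ p.1 ≠ q.2 ∧ p.2 ≠ q.1 ∧ p.2 ≠ q.2)

variable {H}

lemma IsPairing.empty {A : Finset V} : IsPairing H A ∅ := by
  constructor <;> intro p hp <;> simp at hp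

lemma IsPairing.mono_set {A B : Finset V} {M : Finset (V × V)} (h : IsPairing H A M)
    (hAB : A ⊆ B) : IsPairing H B M :=
  ⟨fun p hp => ⟨hAB (h.1 p hp).1, hAB (h.1 p hp).2.1, (h.1 p hp).2.2⟩, h.2⟩

lemma IsPairing.subset {A : Finset V} {M M' : Finset (V × V)} (h : IsPairing H A M)
    (hM : M' ⊆ M) : IsPairing H A M' :=
  ⟨fun p hp => h.1 p (hM hp), fun p hp q hq => h.2 p (hM hp) q (hM hq)⟩

lemma IsPairing.supp_subset {A : Finset V} {M : Finset (V × V)} (h : IsPairing H A M) :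
    supp M ⊆ A := by
  intro x hx
  rw [mem_supp] at hx
  obtain ⟨p, hp, hx⟩ := hx
  rcases hx with h1 | h2
  · exact h1 ▸ (h.1 p hp).1
  · exact h2 ▸ (h.1 p hp).2.1

lemma IsPairing.card_supp {A : Finset V} {M : Finset (V × V)} (h : IsPairing H A M) :
    (supp M).card = 2 * M.card := by
  rw [supp, card_biUnion]
  · rw [Finset.sum_congr rfl (fun p hp => ?_), Finset.sum_const, smul_eq_mul, mul_comm]
    have : p.1 ≠ p.2 := (h.1 p hp).2.2.ne
    rw [card_insert_of_notMem (by simp [this]), card_singleton]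
  · intro p hp q hq hpq
    have h4 := h.2 p hp q hq hpq
    simp only [Finset.disjoint_left, mem_insert, mem_singleton]
    rintro x (rfl | rfl) (h' | h') <;> simp_all

/-- maximal size of a pairing inside `A` -/
noncomputable def nu (H : SimpleGraph V) (A : Finset V) : ℕ :=
  sSup {k | ∃ M, IsPairing H A M ∧ M.card = k}

lemma nu_bddAbove (A : Finset V) : BddAbove {k | ∃ M, IsPairing H A M ∧ M.card = k} := by
  refine ⟨Fintype.card (V × V), fun k hk => ?_⟩
  obtain ⟨M, _, rfl⟩ := hk
  exact Finset.card_le_univ M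

lemma nu_spec (A : Finset V) : ∃ M, IsPairing H A M ∧ M.card = nu H A := by
  have hne : {k | ∃ M, IsPairing H A M ∧ M.card = k}.Nonempty :=
    ⟨0, ∅, IsPairing.empty, by simp⟩
  exact Nat.sSup_mem hne (nu_bddAbove A)

lemma IsPairing.card_le_nu {A : Finset V} {M : Finset (V × V)} (h : IsPairing H A M) :
    M.card ≤ nu H A :=
  le_csSup (nu_bddAbove A) ⟨M, h, rfl⟩

lemma nu_mono {A B : Finset V} (hAB : A ⊆ B) : nu H A ≤ nu H B := by
  obtain ⟨M, hM, hMc⟩ := nu_spec (H := H) A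
  rw [← hMc]
  exact (hM.mono_set hAB).card_le_nu

lemma two_nu_le (A : Finset V) : 2 * nu H A ≤ A.card := by
  obtain ⟨M, hM, hMc⟩ := nu_spec (H := H) A
  rw [← hMc, ← hM.card_supp]
  exact card_le_card hM.supp_subset

lemma IsPairing.union {A B : Finset V} {M N : Finset (V × V)} (hM : IsPairing H A M)
    (hN : IsPairing H B N) (hAB : Disjoint A B) : IsPairing H (A ∪ B) (M ∪ N) := by
  have hdist : ∀ p ∈ M, ∀ q ∈ N, p.1 ≠ q.1 ∧ p.1 ≠ q.2 ∧ p.2 ≠ q.1 ∧ p.2 ≠ q.2 := by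
    intro p hp q hq
    have h1 := hM.1 p hp; have h2 := hN.1 q hq
    exact ⟨fun h => Finset.disjoint_left.mp hAB (h ▸ h1.1) h2.1,
      fun h => Finset.disjoint_left.mp hAB (h ▸ h1.1) h2.2.1,
      fun h => Finset.disjoint_left.mp hAB (h ▸ h1.2.1) h2.1,
      fun h => Finset.disjoint_left.mp hAB (h ▸ h1.2.1) h2.2.1⟩
  constructor
  · intro p hp
    rcases Finset.mem_union.mp hp with h | h
    · exact ⟨Finset.mem_union_left _ (hM.1 p h).1, Finset.mem_union_left _ (hM.1 p h).2.1,
        (hM.1 p h).2.2⟩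
    · exact ⟨Finset.mem_union_right _ (hN.1 p h).1, Finset.mem_union_right _ (hN.1 p h).2.1,
        (hN.1 p h).2.2⟩
  · intro p hp q hq hpq
    rcases Finset.mem_union.mp hp with h1 | h1 <;> rcases Finset.mem_union.mp hq with h2 | h2
    · exact hM.2 p h1 q h2 hpq
    · exact hdist p h1 q h2
    · have := hdist q h2 p h1; tauto
    · exact hN.2 p h1 q h2 hpq

lemma nu_union_ge {A B : Finset V} (hAB : Disjoint A B) :
    nu H A + nu H B ≤ nu H (A ∪ B) := by
  obtain ⟨M, hM, hMc⟩ := nu_spec (H := H) A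
  obtain ⟨N, hN, hNc⟩ := nu_spec (H := H) B
  have hun := hM.union hN hAB
  have hd : Disjoint M N := by
    rw [Finset.disjoint_left]
    intro p hp hq
    have h1 := (hM.1 p hp).1
    have h2 := (hN.1 p hq).1
    exact Finset.disjoint_left.mp hAB h1 h2
  calc nu H A + nu H B = (M ∪ N).card := by rw [Finset.card_union_of_disjoint hd, hMc, hNc]
  _ ≤ nu H (A ∪ B) := hun.card_le_nu

/-- at most one pair of a pairing touches a given vertex; removing it -/
lemma IsPairing.filter_avoid {A : Finset V} {M : Finset (V × V)} (h : IsPairing H A M)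
    (a : V) : IsPairing H (A.erase a) (M.filter (fun p => p.1 ≠ a ∧ p.2 ≠ a)) ∧
      M.card ≤ (M.filter (fun p => p.1 ≠ a ∧ p.2 ≠ a)).card + 1 := by
  constructor
  · constructor
    · intro p hp
      rw [Finset.mem_filter] at hp
      exact ⟨Finset.mem_erase.mpr ⟨hp.2.1, (h.1 p hp.1).1⟩,
        Finset.mem_erase.mpr ⟨hp.2.2, (h.1 p hp.1).2.1⟩, (h.1 p hp.1).2.2⟩
    · intro p hp q hq
      rw [Finset.mem_filter] at hp hq
      exact h.2 p hp.1 q hq.1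
  · have hle : (M.filter (fun p => ¬(p.1 ≠ a ∧ p.2 ≠ a))).card ≤ 1 := by
      rw [Finset.card_le_one]
      intro p hp q hq
      rw [Finset.mem_filter] at hp hq
      by_contra hpq
      have h4 := h.2 p hp.1 q hq.1 hpq
      have hp' := hp.2; have hq' := hq.2
      push_neg at hp' hq'
      rcases Classical.em (p.1 = a) with h1 | h1 <;> rcases Classical.em (q.1 = a) with h2 | h2 <;>
        simp_all
    have hsplit : M.card = (M.filter (fun p => p.1 ≠ a ∧ p.2 ≠ a)).card +
        (M.filter (fun p => ¬(p.1 ≠ a ∧ p.2 ≠ a))).card :=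
      (Finset.card_filter_add_card_filter_not _).symm
    omega

lemma nu_le_erase_add_one {A : Finset V} (a : V) : nu H A ≤ nu H (A.erase a) + 1 := by
  obtain ⟨M, hM, hMc⟩ := nu_spec (H := H) A
  obtain ⟨h1, h2⟩ := hM.filter_avoid a
  calc nu H A = M.card := hMc.symm
  _ ≤ _ + 1 := h2
  _ ≤ nu H (A.erase a) + 1 := by exact Nat.add_le_add_right h1.card_le_nu 1

lemma nu_insert_le {A : Finset V} (a : V) : nu H (insert a A) ≤ nu H A + 1 := by
  have h1 := nu_le_erase_add_one (H := H) (A := insert a A) a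
  have h2 : (insert a A).erase a ⊆ A := Finset.erase_insert_subset a A
  exact h1.trans (Nat.add_le_add_right (nu_mono h2) 1)

/-- no `H`-edges between `A` and `B` -/
def Sep (H : SimpleGraph V) (A B : Finset V) : Prop := ∀ x ∈ A, ∀ y ∈ B, ¬H.Adj x y

lemma Sep.symm {A B : Finset V} (h : Sep H A B) : Sep H B A :=
  fun x hx y hy hadj => h y hy x hx hadj.symm

lemma nu_union_sep {A B : Finset V} (hAB : Disjoint A B) (hsep : Sep H A B) :
    nu H (A ∪ B) = nu H A + nu H B := by
  refine le_antisymm ?_ (nu_union_ge hAB)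
  obtain ⟨M, hM, hMc⟩ := nu_spec (H := H) (A ∪ B)
  rw [← hMc]
  have key : ∀ p ∈ M, (p.1 ∈ A ∧ p.2 ∈ A) ∨ (p.1 ∈ B ∧ p.2 ∈ B) := by
    intro p hp
    obtain ⟨h1, h2, h3⟩ := hM.1 p hp
    rcases Finset.mem_union.mp h1 with ha | hb <;> rcases Finset.mem_union.mp h2 with ha' | hb'
    · exact Or.inl ⟨ha, ha'⟩
    · exact absurd h3 (hsep _ ha _ hb')
    · exact absurd h3.symm (hsep _ ha' _ hb)
    · exact Or.inr ⟨hb, hb'⟩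
  have hMA : IsPairing H A (M.filter (fun p => p.1 ∈ A)) := by
    constructor
    · intro p hp
      rw [Finset.mem_filter] at hp
      rcases key p hp.1 with h | h
      · exact ⟨h.1, h.2, (hM.1 p hp.1).2.2⟩
      · exact absurd hp.2 (Finset.disjoint_right.mp hAB h.1)
    · intro p hp q hq; rw [Finset.mem_filter] at hp hq; exact hM.2 p hp.1 q hq.1
  have hMB : IsPairing H B (M.filter (fun p => p.1 ∉ A)) := by
    constructor
    · intro p hp
      rw [Finset.mem_filter] at hp
      rcases key p hp.1 with h | h
      · exact absurd h.1 hp.2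
      · exact ⟨h.1, h.2, (hM.1 p hp.1).2.2⟩
    · intro p hp q hq; rw [Finset.mem_filter] at hp hq; exact hM.2 p hp.1 q hq.1
  calc M.card = (M.filter (fun p => p.1 ∈ A)).card + (M.filter (fun p => ¬(p.1 ∈ A))).card :=
        (Finset.card_filter_add_card_filter_not _).symm
  _ ≤ nu H A + nu H B := Nat.add_le_add hMA.card_le_nu hMB.card_le_nu


-- BEGIN M2

/-- `I` is an independent set of `H` inside `A`. -/
def IsIndep (H : SimpleGraph V) (A I : Finset V) : Prop :=
  I ⊆ A ∧ ∀ x ∈ I, ∀ y ∈ I, x ≠ y → ¬H.Adj x y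

noncomputable def alph (H : SimpleGraph V) (A : Finset V) : ℕ :=
  sSup {k | ∃ I, IsIndep H A I ∧ I.card = k}

lemma alph_bddAbove (A : Finset V) : BddAbove {k | ∃ I, IsIndep H A I ∧ I.card = k} := by
  refine ⟨Fintype.card V, fun k hk => ?_⟩
  obtain ⟨I, _, rfl⟩ := hk
  exact Finset.card_le_univ I

lemma alph_spec (A : Finset V) : ∃ I, IsIndep H A I ∧ I.card = alph H A := by
  have hne : {k | ∃ I, IsIndep H A I ∧ I.card = k}.Nonempty :=
    ⟨0, ∅, ⟨Finset.empty_subset A, by simp⟩, by simp⟩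
  exact Nat.sSup_mem hne (alph_bddAbove A)

lemma IsIndep.card_le_alph {A I : Finset V} (h : IsIndep H A I) : I.card ≤ alph H A :=
  le_csSup (alph_bddAbove A) ⟨I, h, rfl⟩

lemma alph_mono {A B : Finset V} (hAB : A ⊆ B) : alph H A ≤ alph H B := by
  obtain ⟨I, hI, hIc⟩ := alph_spec (H := H) A
  rw [← hIc]
  exact IsIndep.card_le_alph ⟨hI.1.trans hAB, hI.2⟩

lemma one_le_alph {A : Finset V} (hA : A.Nonempty) : 1 ≤ alph H A := by
  obtain ⟨x, hx⟩ := hA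
  have : ({x} : Finset V).card ≤ alph H A :=
    IsIndep.card_le_alph ⟨Finset.singleton_subset_iff.mpr hx, by simp⟩
  simpa using this

lemma alph_union_sep {A B : Finset V} (hAB : Disjoint A B) (hsep : Sep H A B) :
    alph H A + alph H B ≤ alph H (A ∪ B) := by
  obtain ⟨I, hI, hIc⟩ := alph_spec (H := H) A
  obtain ⟨J, hJ, hJc⟩ := alph_spec (H := H) B
  have hd : Disjoint I J := hAB.mono hI.1 hJ.1
  rw [← hIc, ← hJc, ← Finset.card_union_of_disjoint hd]
  refine IsIndep.card_le_alph ⟨Finset.union_subset_union hI.1 hJ.1, ?_⟩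
  intro x hx y hy hxy
  rcases Finset.mem_union.mp hx with h1 | h1 <;> rcases Finset.mem_union.mp hy with h2 | h2
  · exact hI.2 x h1 y h2 hxy
  · exact hsep x (hI.1 h1) y (hJ.1 h2)
  · exact fun hadj => hsep y (hI.1 h2) x (hJ.1 h1) hadj.symm
  · exact hJ.2 x h1 y h2 hxy

/-- counting: independent set size + pairing size at most card. -/
lemma alph_add_nu_le (A : Finset V) : alph H A + nu H A ≤ A.card := by
  obtain ⟨I, hI, hIc⟩ := alph_spec (H := H) A
  obtain ⟨M, hM, hMc⟩ := nu_spec (H := H) A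
  rw [← hIc, ← hMc]
  classical
  set f : V → V × V := fun x =>
    if h : ∃ p ∈ M, x = p.1 ∨ x = p.2 then Classical.choose h else (x, x) with hf
  have hfspec : ∀ x ∈ supp M, f x ∈ M ∧ (x = (f x).1 ∨ x = (f x).2) := by
    intro x hx
    have h := mem_supp.mp hx
    simp only [hf, dif_pos h]
    exact ⟨(Classical.choose_spec h).1, (Classical.choose_spec h).2⟩
  have hcard1 : (I ∩ supp M).card ≤ M.card := by
    apply Finset.card_le_card_of_injOn f
    · intro x hx
      exact (hfspec x (Finset.mem_inter.mp hx).2).1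
    · intro x hx y hy hxy
      by_contra hne
      obtain ⟨hx1, hx2⟩ := hfspec x (Finset.mem_inter.mp hx).2
      obtain ⟨hy1, hy2⟩ := hfspec y (Finset.mem_inter.mp hy).2
      have hadj := (hM.1 (f y) hy1).2.2
      have hxI := (Finset.mem_inter.mp hx).1
      have hyI := (Finset.mem_inter.mp hy).1
      have hind := hI.2 x hxI y hyI hne
      rw [hxy] at hx2
      rcases hx2 with h1 | h1 <;> rcases hy2 with h2 | h2
      · exact hne (h1.trans h2.symm)
      · exact hind (by rw [← h1, ← h2] at hadj; exact hadj)
      · exact hind (by have := hadj.symm; rw [← h1, ← h2] at this; exact this)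
      · exact hne (h1.trans h2.symm)
  have hcard2 : (I \ supp M).card + (supp M).card ≤ A.card := by
    rw [← Finset.card_union_of_disjoint (Finset.sdiff_disjoint)]
    exact Finset.card_le_card (Finset.union_subset ((Finset.sdiff_subset).trans hI.1) hM.supp_subset)
  have hsupp := hM.card_supp
  have hsplit : I.card = (I \ supp M).card + (I ∩ supp M).card :=
    (Finset.card_sdiff_add_card_inter I (supp M)).symm
  omega


-- BEGIN M3

lemma supp_mono {M M' : Finset (V × V)} (h : M' ⊆ M) : supp M' ⊆ supp M := by
  intro x hx
  rw [mem_supp] at hx ⊢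
  obtain ⟨p, hp, hx⟩ := hx
  exact ⟨p, h hp, hx⟩

lemma mem_supp_left {M : Finset (V × V)} {p : V × V} (hp : p ∈ M) : p.1 ∈ supp M :=
  mem_supp.mpr ⟨p, hp, Or.inl rfl⟩

lemma mem_supp_right {M : Finset (V × V)} {p : V × V} (hp : p ∈ M) : p.2 ∈ supp M :=
  mem_supp.mpr ⟨p, hp, Or.inr rfl⟩

lemma IsPairing.uniquePair {A : Finset V} {M : Finset (V × V)} (h : IsPairing H A M)
    {p q : V × V} {x : V} (hp : p ∈ M) (hq : q ∈ M)
    (hxp : x = p.1 ∨ x = p.2) (hxq : x = q.1 ∨ x = q.2) : p = q := by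
  by_contra hne
  have h4 := h.2 p hp q hq hne
  rcases hxp with h1 | h1 <;> rcases hxq with h2 | h2 <;> subst h1 <;> simp_all

lemma IsPairing.not_mem_supp_erase {A : Finset V} {M : Finset (V × V)} (h : IsPairing H A M)
    {p : V × V} {x : V} (hp : p ∈ M) (hxp : x = p.1 ∨ x = p.2) :
    x ∉ supp (M.erase p) := by
  intro hx
  rw [mem_supp] at hx
  obtain ⟨q, hq, hxq⟩ := hx
  have hqM := Finset.mem_of_mem_erase hq
  have := h.uniquePair hqM hp hxq hxp
  exact (Finset.ne_of_mem_erase hq) this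

lemma IsPairing.insertPair {A : Finset V} {M : Finset (V × V)} (h : IsPairing H A M)
    {x y : V} (hadj : H.Adj x y) (hxA : x ∈ A) (hyA : y ∈ A)
    (hxs : x ∉ supp M) (hys : y ∉ supp M) :
    IsPairing H A (insert (x, y) M) ∧ (insert (x, y) M).card = M.card + 1 := by
  have hnotmem : (x, y) ∉ M := fun hmem => hxs (mem_supp_left hmem)
  refine ⟨⟨?_, ?_⟩, Finset.card_insert_of_notMem hnotmem⟩
  · intro p hp
    rcases Finset.mem_insert.mp hp with rfl | hp'
    · exact ⟨hxA, hyA, hadj⟩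
    · exact h.1 p hp'
  · intro p hp q hq hpq
    have hfresh : ∀ r ∈ M, r.1 ≠ x ∧ r.1 ≠ y ∧ r.2 ≠ x ∧ r.2 ≠ y := by
      intro r hr
      refine ⟨?_, ?_, ?_, ?_⟩ <;> intro heq
      · exact hxs (heq ▸ mem_supp_left hr)
      · exact hys (heq ▸ mem_supp_left hr)
      · exact hxs (heq ▸ mem_supp_right hr)
      · exact hys (heq ▸ mem_supp_right hr)
    rcases Finset.mem_insert.mp hp with rfl | hp' <;> rcases Finset.mem_insert.mp hq with rfl | hq'
    · exact absurd rfl hpq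
    · have := hfresh q hq'; exact ⟨fun e => this.1 e.symm, fun e => this.2.2.1 e.symm,
        fun e => this.2.1 e.symm, fun e => this.2.2.2 e.symm⟩
    · have := hfresh p hp'; exact ⟨this.1, this.2.1, this.2.2.1, this.2.2.2⟩
    · exact h.2 p hp' q hq' hpq

/-- The exchange lemma: if `a` is covered by max pairing `M` but missed by max pairing `N`,
then there is a max pairing missing `a` whose missed set contains all of `M`'s missed set
except possibly one vertex. -/
lemma exchange : ∀ (n : ℕ) (A : Finset V) (M N : Finset (V × V)) (a : V), A.card = n →
    IsPairing H A M → IsPairing H A N → M.card = nu H A → N.card = nu H A →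
    a ∈ supp M → a ∉ supp N →
    ∃ M' z, IsPairing H A M' ∧ M'.card = nu H A ∧ a ∉ supp M' ∧
      (A \ supp M) \ {z} ⊆ A \ supp M' := by
  intro n
  induction n using Nat.strong_induction_on with
  | _ n IH =>
  intro A M N a hcard hM hN hMmax hNmax haM haN
  obtain ⟨p, hp, hap⟩ := mem_supp.mp haM
  set b := if a = p.1 then p.2 else p.1 with hb
  have hpend : (p.1 = a ∧ p.2 = b) ∨ (p.1 = b ∧ p.2 = a) := by
    rcases hap with h1 | h1
    · left; simp [hb, ← h1]
    · right
      constructor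
      · by_cases h2 : a = p.1
        · exfalso; exact (hM.1 p hp).2.2.ne (h2.symm.trans h1)
        · simp [hb, h2]
      · exact h1.symm
  have hadj : H.Adj a b := by
    rcases hpend with ⟨h1, h2⟩ | ⟨h1, h2⟩
    · rw [← h1, ← h2]; exact (hM.1 p hp).2.2
    · rw [← h1, ← h2]; exact (hM.1 p hp).2.2.symm
  have haA : a ∈ A := hM.supp_subset haM
  have hbA : b ∈ A := by
    rcases hpend with ⟨h1, h2⟩ | ⟨h1, h2⟩
    · exact h2 ▸ (hM.1 p hp).2.1
    · exact h1 ▸ (hM.1 p hp).1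
  have hab : a ≠ b := hadj.ne
  have hbM : b ∈ supp M := by
    rcases hpend with ⟨h1, h2⟩ | ⟨h1, h2⟩
    · exact h2 ▸ mem_supp_right hp
    · exact h1 ▸ mem_supp_left hp
  -- b must be covered by N
  have hbN : b ∈ supp N := by
    by_contra hbn
    obtain ⟨hN', hc'⟩ := hN.insertPair hadj haA hbA haN hbn
    have := hN'.card_le_nu
    omega
  obtain ⟨q, hq, hbq⟩ := mem_supp.mp hbN
  set c := if b = q.1 then q.2 else q.1 with hc
  have hqend : (q.1 = b ∧ q.2 = c) ∨ (q.1 = c ∧ q.2 = b) := by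
    rcases hbq with h1 | h1
    · left; simp [hc, ← h1]
    · right
      constructor
      · by_cases h2 : b = q.1
        · exfalso; exact (hN.1 q hq).2.2.ne (h2.symm.trans h1)
        · simp [hc, h2]
      · exact h1.symm
  have hbcadj : H.Adj b c := by
    rcases hqend with ⟨h1, h2⟩ | ⟨h1, h2⟩
    · rw [← h1, ← h2]; exact (hN.1 q hq).2.2
    · rw [← h1, ← h2]; exact (hN.1 q hq).2.2.symm
  have hcA : c ∈ A := by
    rcases hqend with ⟨h1, h2⟩ | ⟨h1, h2⟩
    · exact h2 ▸ (hN.1 q hq).2.1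
    · exact h1 ▸ (hN.1 q hq).1
  have hbc : b ≠ c := hbcadj.ne
  have hcN : c ∈ supp N := by
    rcases hqend with ⟨h1, h2⟩ | ⟨h1, h2⟩
    · exact h2 ▸ mem_supp_right hq
    · exact h1 ▸ mem_supp_left hq
  have hca : c ≠ a := fun h => haN (h ▸ hcN)
  -- a, b not in supp (M.erase p)
  have haMe : a ∉ supp (M.erase p) := hM.not_mem_supp_erase hp hap
  have hbMe : b ∉ supp (M.erase p) := by
    apply hM.not_mem_supp_erase hp
    rcases hpend with ⟨h1, h2⟩ | ⟨h1, h2⟩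
    · exact Or.inr h2.symm
    · exact Or.inl h1.symm
  have hMe : IsPairing H A (M.erase p) := hM.subset (Finset.erase_subset p M)
  have hMecard : (M.erase p).card = M.card - 1 := Finset.card_erase_of_mem hp
  have hMpos : 1 ≤ M.card := Finset.card_pos.mpr ⟨p, hp⟩
  by_cases hcM : c ∈ supp M
  · -- recursive case
    set A' := (A.erase a).erase b with hA'
    have hbea : b ∈ A.erase a := Finset.mem_erase.mpr ⟨fun h => hab h.symm, hbA⟩
    have hA'card : A'.card = A.card - 2 := by
      rw [hA', Finset.card_erase_of_mem hbea, Finset.card_erase_of_mem haA]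
      omega
    have hA'sub : A' ⊆ A := (Finset.erase_subset _ _).trans (Finset.erase_subset _ _)
    have hmemA' : ∀ x, x ∈ A → x ≠ a → x ≠ b → x ∈ A' := fun x h1 h2 h3 =>
      Finset.mem_erase.mpr ⟨h3, Finset.mem_erase.mpr ⟨h2, h1⟩⟩
    -- M.erase p is a pairing of A'
    have hM0 : IsPairing H A' (M.erase p) := by
      refine ⟨fun r hr => ?_, fun r hr s hs => hMe.2 r hr s hs⟩
      have hrM := Finset.mem_of_mem_erase hr
      have h1 := hM.1 r hrM
      refine ⟨hmemA' _ h1.1 ?_ ?_, hmemA' _ h1.2.1 ?_ ?_, h1.2.2⟩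
      · exact fun e => haMe (e ▸ mem_supp_left hr)
      · exact fun e => hbMe (e ▸ mem_supp_left hr)
      · exact fun e => haMe (e ▸ mem_supp_right hr)
      · exact fun e => hbMe (e ▸ mem_supp_right hr)
    -- nu A' = nu A - 1
    have hnuA'le : nu H A' + 1 ≤ nu H A := by
      obtain ⟨P, hP, hPc⟩ := nu_spec (H := H) A'
      have hPA : IsPairing H A P := hP.mono_set hA'sub
      have haP : a ∉ supp P := fun h => (Finset.mem_erase.mp ((Finset.mem_erase.mp
        (hP.supp_subset h)).2)).1 rfl
      have hbP : b ∉ supp P := fun h => (Finset.mem_erase.mp (hP.supp_subset h)).1 rfl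
      obtain ⟨hP', hPc'⟩ := hPA.insertPair hadj haA hbA haP hbP
      have := hP'.card_le_nu
      omega
    have hnuA' : nu H A' = nu H A - 1 := by
      have h1 : M.card - 1 ≤ nu H A' := hMecard ▸ hM0.card_le_nu
      omega
    -- N.erase q is a max pairing of A'
    have hN0 : IsPairing H A' (N.erase q) := by
      have haNe : a ∉ supp (N.erase q) := fun h => haN (supp_mono (Finset.erase_subset q N) h)
      have hbNe : b ∉ supp (N.erase q) := by
        apply hN.not_mem_supp_erase hq
        rcases hqend with ⟨h1, h2⟩ | ⟨h1, h2⟩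
        · exact Or.inl h1.symm
        · exact Or.inr h2.symm
      refine ⟨fun r hr => ?_, fun r hr s hs => hN.2 r (Finset.mem_of_mem_erase hr) s
        (Finset.mem_of_mem_erase hs)⟩
      have hrN := Finset.mem_of_mem_erase hr
      have h1 := hN.1 r hrN
      refine ⟨hmemA' _ h1.1 ?_ ?_, hmemA' _ h1.2.1 ?_ ?_, h1.2.2⟩
      · exact fun e => haNe (e ▸ mem_supp_left hr)
      · exact fun e => hbNe (e ▸ mem_supp_left hr)
      · exact fun e => haNe (e ▸ mem_supp_right hr)
      · exact fun e => hbNe (e ▸ mem_supp_right hr)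
    have hN0card : (N.erase q).card = nu H A' := by
      have h1 := Finset.card_erase_of_mem hq
      have h2 : 1 ≤ N.card := Finset.card_pos.mpr ⟨q, hq⟩
      omega
    -- c in supp of M.erase p, not in supp of N.erase q
    have hcM0 : c ∈ supp (M.erase p) := by
      obtain ⟨r, hr, hcr⟩ := mem_supp.mp hcM
      have hrp : r ≠ p := by
        intro e
        subst e
        rcases hcr with h1 | h1 <;> rcases hpend with ⟨e1, e2⟩ | ⟨e1, e2⟩
        · exact hca (h1.trans e1)
        · exact hbc ((h1.trans e1)).symm
        · exact hbc ((h1.trans e2)).symm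
        · exact hca (h1.trans e2)
      exact mem_supp.mpr ⟨r, Finset.mem_erase.mpr ⟨hrp, hr⟩, hcr⟩
    have hcN0 : c ∉ supp (N.erase q) := by
      apply hN.not_mem_supp_erase hq
      rcases hqend with ⟨h1, h2⟩ | ⟨h1, h2⟩
      · exact Or.inr h2.symm
      · exact Or.inl h1.symm
    have hcA' : c ∈ A' := by
      refine hmemA' _ hcA hca ?_
      exact fun e => hbc e.symm
    have hM0card : (M.erase p).card = nu H A' := by omega
    -- apply IH
    have hlt : A.card - 2 < n := by
      have : 1 ≤ A.card := Finset.card_pos.mpr ⟨a, haA⟩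
      omega
    obtain ⟨M₁, z', hM₁, hM₁card, hcM₁, hmiss⟩ := IH (A.card - 2) hlt A' (M.erase p)
      (N.erase q) c hA'card hM0 hN0 hM0card hN0card hcM0 hcN0
    -- build M' = insert (b,c) M₁
    have hM₁A : IsPairing H A M₁ := hM₁.mono_set hA'sub
    have hbM₁ : b ∉ supp M₁ := fun h => (Finset.mem_erase.mp (hM₁.supp_subset h)).1 rfl
    obtain ⟨hM', hM'card⟩ := hM₁A.insertPair hbcadj hbA hcA hbM₁ hcM₁
    refine ⟨insert (b, c) M₁, z', hM', by omega, ?_, ?_⟩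
    · intro ha'
      rw [mem_supp] at ha'
      obtain ⟨r, hr, har⟩ := ha'
      rcases Finset.mem_insert.mp hr with rfl | hr'
      · rcases har with h1 | h1
        · exact hab h1
        · exact hca h1.symm
      · have := hM₁.supp_subset (mem_supp.mpr ⟨r, hr', har⟩)
        exact (Finset.mem_erase.mp ((Finset.mem_erase.mp this).2)).1 rfl
    · intro x hx
      rw [Finset.mem_sdiff] at hx
      obtain ⟨hx1, hxz⟩ := hx
      rw [Finset.mem_sdiff] at hx1
      obtain ⟨hxA, hxM⟩ := hx1
      rw [Finset.mem_singleton] at hxz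
      have hxa : x ≠ a := fun e => hxM (e ▸ haM)
      have hxb : x ≠ b := fun e => hxM (e ▸ hbM)
      have hxc : x ≠ c := fun e => hxM (e ▸ hcM)
      have hxA' : x ∈ A' := hmemA' _ hxA hxa hxb
      have hxM0 : x ∉ supp (M.erase p) := fun h => hxM (supp_mono (Finset.erase_subset p M) h)
      have hx' : x ∈ A' \ supp M₁ := hmiss (by
        rw [Finset.mem_sdiff]; exact ⟨Finset.mem_sdiff.mpr ⟨hxA', hxM0⟩, by
          rw [Finset.mem_singleton]; exact hxz⟩)
      rw [Finset.mem_sdiff] at hx' ⊢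
      refine ⟨hxA, ?_⟩
      intro hxs
      rw [mem_supp] at hxs
      obtain ⟨r, hr, hxr⟩ := hxs
      rcases Finset.mem_insert.mp hr with rfl | hr'
      · rcases hxr with h1 | h1
        · exact hxb h1
        · exact hxc h1
      · exact hx'.2 (mem_supp.mpr ⟨r, hr', hxr⟩)
  · -- base case: c not covered by M: direct swap
    have hcMe : c ∉ supp (M.erase p) := fun h => hcM (supp_mono (Finset.erase_subset p M) h)
    obtain ⟨hM', hM'card⟩ := hMe.insertPair hbcadj hbA hcA hbMe hcMe
    refine ⟨insert (b, c) (M.erase p), c, hM', by omega, ?_, ?_⟩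
    · intro ha'
      rw [mem_supp] at ha'
      obtain ⟨r, hr, har⟩ := ha'
      rcases Finset.mem_insert.mp hr with rfl | hr'
      · rcases har with h1 | h1
        · exact hab h1
        · exact hca h1.symm
      · exact haMe (mem_supp.mpr ⟨r, hr', har⟩)
    · intro x hx
      rw [Finset.mem_sdiff] at hx
      obtain ⟨hx1, hxz⟩ := hx
      rw [Finset.mem_sdiff] at hx1
      obtain ⟨hxA, hxM⟩ := hx1
      rw [Finset.mem_singleton] at hxz
      rw [Finset.mem_sdiff]
      refine ⟨hxA, ?_⟩
      intro hxs
      rw [mem_supp] at hxs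
      obtain ⟨r, hr, hxr⟩ := hxs
      rcases Finset.mem_insert.mp hr with rfl | hr'
      · rcases hxr with h1 | h1
        · exact hxM (h1 ▸ hbM)
        · exact hxz h1
      · exact hxM (supp_mono (Finset.erase_subset p M) (mem_supp.mpr ⟨r, hr', hxr⟩))

-- BEGIN M45

/-- a walk inside `A` from `u` to `v` recorded by its tail list -/
def WalkIn (H : SimpleGraph V) (A : Finset V) (u v : V) (l : List V) : Prop :=
  u ∈ A ∧ (∀ x ∈ l, x ∈ A) ∧ List.Chain H.Adj u l ∧ l.getLastD u = v

def ReachIn (H : SimpleGraph V) (A : Finset V) (u v : V) : Prop :=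
  ∃ l, WalkIn H A u v l

lemma walkIn_nil {A : Finset V} {u : V} (hu : u ∈ A) : WalkIn H A u u [] :=
  ⟨hu, by simp, List.Chain.nil, rfl⟩

lemma walkIn_single {A : Finset V} {u v : V} (h : H.Adj u v) (hu : u ∈ A) (hv : v ∈ A) :
    WalkIn H A u v [v] :=
  ⟨hu, by simp [hv], List.isChain_pair.mpr h, rfl⟩

lemma walkIn_cons_iff {A : Finset V} {u v a : V} {l : List V} :
    WalkIn H A u v (a :: l) ↔ H.Adj u a ∧ u ∈ A ∧ WalkIn H A a v l := by
  unfold WalkIn List.Chain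
  rw [List.chain_cons, List.getLastD_cons]
  constructor
  · rintro ⟨hu, hmem, ⟨h1, h2⟩, hlast⟩
    exact ⟨h1, hu, hmem a (by simp), fun x hx => hmem x (by simp [hx]), h2, hlast⟩
  · rintro ⟨hadj, hu, ha, hmem, hchain, hlast⟩
    refine ⟨hu, ?_, ⟨hadj, hchain⟩, hlast⟩
    intro x hx
    rcases List.mem_cons.mp hx with rfl | hx
    · exact ha
    · exact hmem x hx

lemma reachIn_refl {A : Finset V} {u : V} (hu : u ∈ A) : ReachIn H A u u :=
  ⟨[], walkIn_nil hu⟩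

lemma reachIn_extend {A : Finset V} {u x y : V} (h : ReachIn H A u x)
    (hadj : H.Adj x y) (hy : y ∈ A) : ReachIn H A u y := by
  obtain ⟨l, hl⟩ := h
  induction l generalizing u with
  | nil =>
    obtain ⟨hu, -, -, hlast⟩ := hl
    simp only [List.getLastD_nil] at hlast
    subst hlast
    exact ⟨[y], walkIn_single hadj hu hy⟩
  | cons a l ih =>
    rw [walkIn_cons_iff] at hl
    obtain ⟨hua, hu, hl'⟩ := hl
    obtain ⟨l'', hl''⟩ := ih hl'
    exact ⟨a :: l'', walkIn_cons_iff.mpr ⟨hua, hu, hl''⟩⟩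

/-- Gallai-type lemma: if every vertex of `A` is missable but some maximum pairing
misses two distinct vertices that are connected inside `A`, contradiction. -/
lemma gallai {A : Finset V} (hcal : ∀ a ∈ A, nu H (A.erase a) = nu H A)
    {M : Finset (V × V)} {u v : V} (hM : IsPairing H A M) (hMmax : M.card = nu H A)
    (huv : u ≠ v) (hum : u ∉ supp M) (hvm : v ∉ supp M) (hu : u ∈ A) (hv : v ∈ A)
    (hr : ReachIn H A u v) : False := by
  classical
  set K : Set ℕ := {k | ∃ (M₁ : Finset (V × V)) (u₁ v₁ : V) (l₁ : List V),
    IsPairing H A M₁ ∧ M₁.card = nu H A ∧ u₁ ≠ v₁ ∧ u₁ ∉ supp M₁ ∧ v₁ ∉ supp M₁ ∧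
    u₁ ∈ A ∧ v₁ ∈ A ∧ WalkIn H A u₁ v₁ l₁ ∧ l₁.length = k} with hK
  obtain ⟨l, hl⟩ := hr
  have hKne : K.Nonempty := ⟨l.length, M, u, v, l, hM, hMmax, huv, hum, hvm, hu, hv, hl, rfl⟩
  obtain ⟨M₁, u₁, v₁, l₁, hM₁, hM₁max, huv₁, hum₁, hvm₁, hu₁, hv₁, hw₁, hlen₁⟩ :=
    Nat.sInf_mem hKne
  set k₀ := sInf K with hk₀
  have hmin : ∀ j ∈ K, k₀ ≤ j := fun j hj => Nat.sInf_le hj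
  -- l₁ nonempty
  match l₁, hw₁, hlen₁ with
  | [], hw₁, hlen₁ =>
    exact huv₁ hw₁.2.2.2
  | a :: l₂, hw₁, hlen₁ =>
  rw [walkIn_cons_iff] at hw₁
  obtain ⟨hadj_ua, -, hw₂⟩ := hw₁
  have haA : a ∈ A := hw₂.1
  have hlen : l₂.length + 1 = k₀ := by simpa using hlen₁
  -- k₀ is not 1
  have hk1 : k₀ ≠ 1 := by
    intro h1
    have : l₂ = [] := by
      have : l₂.length = 0 := by omega
      exact List.length_eq_zero_iff.mp this
    subst this
    have hv₁a : a = v₁ := by simpa using hw₂.2.2.2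
    have hadj : H.Adj u₁ v₁ := hv₁a ▸ hadj_ua
    obtain ⟨hP, hPc⟩ := hM₁.insertPair hadj hu₁ hv₁ hum₁ hvm₁
    have := hP.card_le_nu
    omega
  have hk2 : 2 ≤ k₀ := by
    have : k₀ ≠ 0 := by
      intro h0
      have : (a :: l₂).length = 0 := by omega
      simp at this
    omega
  -- a must be covered by M₁
  have haM₁ : a ∈ supp M₁ := by
    by_contra haM₁
    have hmem : (1 : ℕ) ∈ K := ⟨M₁, u₁, a, [a], hM₁, hM₁max, hadj_ua.ne, hum₁, haM₁, hu₁, haA,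
      walkIn_single hadj_ua hu₁ haA, rfl⟩
    exact absurd (hmin 1 hmem) (by omega)
  -- get a maximum pairing missing a, apply exchange
  obtain ⟨N, hN, hNc⟩ := nu_spec (H := H) (A.erase a)
  have hNA : IsPairing H A N := hN.mono_set (Finset.erase_subset a A)
  have hNmax : N.card = nu H A := by rw [hNc, hcal a haA]
  have haN : a ∉ supp N := fun h => (Finset.mem_erase.mp (hN.supp_subset h)).1 rfl
  obtain ⟨M', z, hM', hM'max, haM', hmiss⟩ :=
    exchange A.card A M₁ N a rfl hM₁ hNA hM₁max hNmax haM₁ haN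
  have humiss : u₁ ∈ A \ supp M₁ := Finset.mem_sdiff.mpr ⟨hu₁, hum₁⟩
  have hvmiss : v₁ ∈ A \ supp M₁ := Finset.mem_sdiff.mpr ⟨hv₁, hvm₁⟩
  have hau₁ : a ≠ u₁ := fun h => hum₁ (h ▸ haM₁)
  have hav₁ : a ≠ v₁ := fun h => hvm₁ (h ▸ haM₁)
  by_cases hz : u₁ = z
  · -- use walk a → v₁ of length k₀ - 1
    have hvM' : v₁ ∉ supp M' := by
      have : v₁ ∈ A \ supp M' := hmiss (Finset.mem_sdiff.mpr ⟨hvmiss, by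
        rw [Finset.mem_singleton]; exact fun h => huv₁ (hz ▸ h ▸ rfl)⟩)
      exact (Finset.mem_sdiff.mp this).2
    have hmem : l₂.length ∈ K := ⟨M', a, v₁, l₂, hM', hM'max, hav₁, haM', hvM', haA, hv₁, hw₂, rfl⟩
    have := hmin _ hmem
    omega
  · -- use walk a → u₁ of length 1
    have huM' : u₁ ∉ supp M' := by
      have : u₁ ∈ A \ supp M' := hmiss (Finset.mem_sdiff.mpr ⟨humiss, by
        rw [Finset.mem_singleton]; exact hz⟩)
      exact (Finset.mem_sdiff.mp this).2
    have hmem : (1 : ℕ) ∈ K := ⟨M', a, u₁, [u₁], hM', hM'max, hau₁, haM', huM', haA, hu₁,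
      walkIn_single hadj_ua.symm haA hu₁, rfl⟩
    exact absurd (hmin 1 hmem) (by omega)

open scoped Classical in
/-- vertices of `A` reachable from `u` within `A` -/
noncomputable def Rset (H : SimpleGraph V) (A : Finset V) (u : V) : Finset V :=
  A.filter (fun x => ReachIn H A u x)

lemma mem_Rset {A : Finset V} {u x : V} : x ∈ Rset H A u ↔ x ∈ A ∧ ReachIn H A u x := by
  classical
  simp [Rset]

lemma self_mem_Rset {A : Finset V} {u : V} (hu : u ∈ A) : u ∈ Rset H A u :=
  mem_Rset.mpr ⟨hu, reachIn_refl hu⟩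

lemma Rset_subset {A : Finset V} {u : V} : Rset H A u ⊆ A := fun _ h => (mem_Rset.mp h).1

lemma sep_Rset {A : Finset V} {u : V} : Sep H (Rset H A u) (A \ Rset H A u) := by
  intro x hx y hy hadj
  rw [Finset.mem_sdiff] at hy
  obtain ⟨hx1, hx2⟩ := mem_Rset.mp hx
  exact hy.2 (mem_Rset.mpr ⟨hy.1, reachIn_extend hx2 hadj hy.1⟩)


-- BEGIN M6A

lemma nu_split_le {A X : Finset V} (hX : X ⊆ A) : nu H X + nu H (A \ X) ≤ nu H A := by
  have h := nu_union_ge (H := H) (A := X) (B := A \ X) (Finset.disjoint_sdiff)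
  rwa [Finset.union_sdiff_of_subset hX] at h

lemma missable_part {A B1 B2 : Finset V} (hdisj : Disjoint B1 B2) (hun : B1 ∪ B2 = A)
    (hsep : Sep H B1 B2) (hcal : ∀ x ∈ A, nu H (A.erase x) = nu H A) :
    ∀ x ∈ B1, nu H (B1.erase x) = nu H B1 := by
  intro x hx
  have hxA : x ∈ A := hun ▸ Finset.mem_union_left _ hx
  have hxB2 : x ∉ B2 := Finset.disjoint_left.mp hdisj hx
  have hErase : A.erase x = (B1.erase x) ∪ B2 := by
    ext y
    simp only [Finset.mem_erase, Finset.mem_union, ← hun]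
    constructor
    · rintro ⟨hyx, hy | hy⟩
      · exact Or.inl ⟨hyx, hy⟩
      · exact Or.inr hy
    · rintro (⟨hyx, hy⟩ | hy)
      · exact ⟨hyx, Or.inl hy⟩
      · exact ⟨fun h => hxB2 (h ▸ hy), Or.inr hy⟩
  have hsep' : Sep H (B1.erase x) B2 := fun a ha b hb => hsep a (Finset.mem_of_mem_erase ha) b hb
  have hdisj' : Disjoint (B1.erase x) B2 := hdisj.mono_left (Finset.erase_subset x B1)
  have h1 : nu H (A.erase x) = nu H (B1.erase x) + nu H B2 := by
    rw [hErase]; exact nu_union_sep hdisj' hsep'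
  have h2 : nu H A = nu H B1 + nu H B2 := by
    rw [← hun]; exact nu_union_sep hdisj hsep
  have h3 := hcal x hxA
  have h4 : nu H (B1.erase x) ≤ nu H B1 := nu_mono (Finset.erase_subset x B1)
  omega

lemma sdiff_union_split {A B1 B2 S1 S2 : Finset V} (hdisj : Disjoint B1 B2)
    (hun : B1 ∪ B2 = A) (hS1 : S1 ⊆ B1) (hS2 : S2 ⊆ B2) :
    A \ (S1 ∪ S2) = (B1 \ S1) ∪ (B2 \ S2) := by
  ext y
  simp only [Finset.mem_sdiff, Finset.mem_union, ← hun]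
  constructor
  · rintro ⟨hy | hy, hn⟩
    · push_neg at hn
      exact Or.inl ⟨hy, hn.1⟩
    · push_neg at hn
      exact Or.inr ⟨hy, hn.2⟩
  · rintro (⟨hy, hn⟩ | ⟨hy, hn⟩)
    · refine ⟨Or.inl hy, ?_⟩
      rintro (h | h)
      · exact hn h
      · exact Finset.disjoint_left.mp hdisj hy (hS2 h)
    · refine ⟨Or.inr hy, ?_⟩
      rintro (h | h)
      · exact Finset.disjoint_right.mp hdisj hy (hS1 h)
      · exact hn h

/-- remove `v` pairs of a maximum pairing: a lossless split for `v ≤ nu`. -/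
lemma lossless_small {A : Finset V} {v : ℕ} (hv : v ≤ nu H A) :
    ∃ S ⊆ A, S.card = 2 * v ∧ nu H S = v ∧ nu H (A \ S) + v ≤ nu H A := by
  obtain ⟨M, hM, hMc⟩ := nu_spec (H := H) A
  obtain ⟨M₁, hM₁sub, hM₁c⟩ := Finset.exists_subset_card_eq (hMc ▸ hv)
  have hM₁ : IsPairing H A M₁ := hM.subset hM₁sub
  refine ⟨supp M₁, hM₁.supp_subset, by rw [hM₁.card_supp, hM₁c], ?_, ?_⟩
  · -- nu (supp M₁) = v
    have hle : v ≤ nu H (supp M₁) := by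
      have : IsPairing H (supp M₁) M₁ := by
        refine ⟨fun p hp => ⟨mem_supp_left hp, mem_supp_right hp, (hM₁.1 p hp).2.2⟩, hM₁.2⟩
      rw [← hM₁c]
      exact this.card_le_nu
    have hge : nu H (supp M₁) ≤ v := by
      -- M \ M₁ is a pairing of A \ supp M₁
      have hrest : IsPairing H (A \ supp M₁) (M \ M₁) := by
        refine ⟨fun p hp => ?_, fun p hp q hq => hM.2 p (Finset.mem_sdiff.mp hp).1 q
          (Finset.mem_sdiff.mp hq).1⟩
        obtain ⟨hpM, hpM₁⟩ := Finset.mem_sdiff.mp hp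
        have h1 := hM.1 p hpM
        refine ⟨Finset.mem_sdiff.mpr ⟨h1.1, ?_⟩, Finset.mem_sdiff.mpr ⟨h1.2.1, ?_⟩, h1.2.2⟩
        · intro hin
          obtain ⟨r, hr, hxr⟩ := mem_supp.mp hin
          exact hpM₁ ((hM.uniquePair hpM (hM₁sub hr) (Or.inl rfl) hxr) ▸ hr)
        · intro hin
          obtain ⟨r, hr, hxr⟩ := mem_supp.mp hin
          exact hpM₁ ((hM.uniquePair hpM (hM₁sub hr) (Or.inr rfl) hxr) ▸ hr)
      have hrestcard : (M \ M₁).card = nu H A - v := by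
        rw [Finset.card_sdiff_of_subset hM₁sub, hMc, hM₁c]
      have h1 := hrest.card_le_nu
      have h2 := nu_split_le (H := H) hM₁.supp_subset
      omega
    omega
  · -- nu (A \ supp M₁) + v ≤ nu A
    have h2 := nu_split_le (H := H) hM₁.supp_subset
    have hle : v ≤ nu H (supp M₁) := by
      have : IsPairing H (supp M₁) M₁ :=
        ⟨fun p hp => ⟨mem_supp_left hp, mem_supp_right hp, (hM₁.1 p hp).2.2⟩, hM₁.2⟩
      rw [← hM₁c]
      exact this.card_le_nu
    omega

lemma nu_empty : nu H (∅ : Finset V) = 0 := by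
  have := two_nu_le (H := H) (∅ : Finset V)
  simp at this
  omega

/-- Full lossless splitting for "all-missable" sets. -/
lemma main2 : ∀ (n : ℕ) (A : Finset V), A.card = n →
    (∀ x ∈ A, nu H (A.erase x) = nu H A) →
    ∀ v w, v + w + nu H A = A.card →
    ∃ S ⊆ A, nu H S + v ≤ S.card ∧ nu H (A \ S) + w ≤ (A \ S).card := by
  intro n
  induction n using Nat.strong_induction_on with
  | _ n IH =>
  intro A hcard hcal v w hvw
  have h2nu := two_nu_le (H := H) A
  by_cases hv : v ≤ nu H A
  · -- small v : direct
    obtain ⟨S, hS, hScard, hSnu, hcompl⟩ := lossless_small (H := H) hv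
    refine ⟨S, hS, by omega, ?_⟩
    have hcardT : (A \ S).card = A.card - 2 * v := by
      rw [Finset.card_sdiff_of_subset hS, hScard]
    omega
  · push_neg at hv
    by_cases hd : A.card ≤ 2 * nu H A + 1
    · -- d ≤ 1 : forced v = nu + 1, w = 0, S = A
      have hveq : v = nu H A + 1 ∧ w = 0 ∧ A.card = 2 * nu H A + 1 := by omega
      refine ⟨A, Finset.Subset.refl A, by omega, ?_⟩
      rw [Finset.sdiff_self]
      have := nu_empty (H := H) (V := V)
      simp [this, hveq.2.1]
    · -- d ≥ 2 : split
      push_neg at hd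
      obtain ⟨M, hM, hMc⟩ := nu_spec (H := H) A
      have hmisscard : 2 ≤ (A \ supp M).card := by
        rw [Finset.card_sdiff_of_subset hM.supp_subset, hM.card_supp]
        omega
      obtain ⟨u, hu, v', hv', huv'⟩ := Finset.one_lt_card.mp hmisscard
      have huA : u ∈ A := (Finset.mem_sdiff.mp hu).1
      have hv'A : v' ∈ A := (Finset.mem_sdiff.mp hv').1
      have hnr : ¬ReachIn H A u v' := by
        intro hr
        exact gallai hcal hM hMc huv' (Finset.mem_sdiff.mp hu).2 (Finset.mem_sdiff.mp hv').2
          huA hv'A hr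
      set B1 := Rset H A u with hB1
      set B2 := A \ B1 with hB2
      have hsub1 : B1 ⊆ A := Rset_subset
      have hdisj : Disjoint B1 B2 := Finset.disjoint_sdiff
      have hun : B1 ∪ B2 = A := Finset.union_sdiff_of_subset hsub1
      have hsep : Sep H B1 B2 := sep_Rset
      have huB1 : u ∈ B1 := self_mem_Rset huA
      have hv'B2 : v' ∈ B2 := Finset.mem_sdiff.mpr ⟨hv'A, fun h => hnr (mem_Rset.mp h).2⟩
      have hnu_add : nu H A = nu H B1 + nu H B2 := by
        rw [← hun]; exact nu_union_sep hdisj hsep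
      have hcard_add : A.card = B1.card + B2.card := by
        rw [← hun, Finset.card_union_of_disjoint hdisj]
      have hcal1 : ∀ x ∈ B1, nu H (B1.erase x) = nu H B1 :=
        missable_part hdisj hun hsep hcal
      have hcal2 : ∀ x ∈ B2, nu H (B2.erase x) = nu H B2 :=
        missable_part hdisj.symm (by rw [Finset.union_comm]; exact hun) hsep.symm hcal
      have h2nu1 := two_nu_le (H := H) B1
      have h2nu2 := two_nu_le (H := H) B2
      have hlt1 : B1.card < n := by
        rw [← hcard]
        have : B2.Nonempty := ⟨v', hv'B2⟩
        have := Finset.card_pos.mpr this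
        omega
      have hlt2 : B2.card < n := by
        rw [← hcard]
        have : B1.Nonempty := ⟨u, huB1⟩
        have := Finset.card_pos.mpr this
        omega
      -- split v and w between the parts
      set f1 := B1.card - nu H B1 with hf1
      set f2 := B2.card - nu H B2 with hf2
      set v1 := min v f1 with hv1
      set v2 := v - v1 with hv2
      set w1 := f1 - v1 with hw1
      set w2 := f2 - v2 with hw2
      have hkey : v1 + w1 + nu H B1 = B1.card ∧ v2 + w2 + nu H B2 = B2.card ∧
          v = v1 + v2 ∧ w = w1 + w2 := by
        omega
      obtain ⟨S1, hS1, hS1a, hS1b⟩ := IH B1.card hlt1 B1 rfl hcal1 v1 w1 hkey.1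
      obtain ⟨S2, hS2, hS2a, hS2b⟩ := IH B2.card hlt2 B2 rfl hcal2 v2 w2 hkey.2.1
      refine ⟨S1 ∪ S2, ?_, ?_, ?_⟩
      · rw [← hun]; exact Finset.union_subset_union hS1 hS2
      · have hd : Disjoint S1 S2 := hdisj.mono hS1 hS2
        have hsep' : Sep H S1 S2 := fun a ha b hb => hsep a (hS1 ha) b (hS2 hb)
        have := nu_union_sep (H := H) hd hsep'
        rw [this, Finset.card_union_of_disjoint hd]
        omega
      · rw [sdiff_union_split hdisj hun hS1 hS2]
        have hd : Disjoint (B1 \ S1) (B2 \ S2) :=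
          (hdisj.mono (Finset.sdiff_subset) (Finset.sdiff_subset))
        have hsep' : Sep H (B1 \ S1) (B2 \ S2) := fun a ha b hb =>
          hsep a (Finset.mem_sdiff.mp ha).1 b (Finset.mem_sdiff.mp hb).1
        have := nu_union_sep (H := H) hd hsep'
        rw [this, Finset.card_union_of_disjoint hd]
        omega


-- BEGIN M6B

lemma cliquefree_helper (hH3 : H.CliqueFree 3) {x y z : V} (hxy : H.Adj x y)
    (hxz : H.Adj x z) (hyz : y ≠ z) : ¬H.Adj y z := by
  intro h
  apply hH3 {x, y, z}
  constructor
  · intro a ha b hb hab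
    simp only [Finset.coe_insert, Set.mem_insert_iff, Finset.coe_singleton,
      Set.mem_singleton_iff] at ha hb
    rcases ha with rfl | rfl | rfl <;> rcases hb with rfl | rfl | rfl <;>
      first
        | exact absurd rfl hab
        | exact hxy
        | exact hxz
        | exact h
        | exact hxy.symm
        | exact hxz.symm
        | exact h.symm
  · rw [Finset.card_insert_of_notMem (by simp [hxy.ne, hxz.ne]),
      Finset.card_insert_of_notMem (by simp [hyz]), Finset.card_singleton]

lemma deficient_three (hH3 : H.CliqueFree 3) {B : Finset V}
    (hdef : alph H B + 1 + nu H B ≤ B.card) : nu H B + 3 ≤ B.card := by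
  have h2nu := two_nu_le (H := H) B
  have hne : B.Nonempty := Finset.card_pos.mp (by omega)
  have ha1 : 1 ≤ alph H B := one_le_alph hne
  by_contra hcon
  have halph : alph H B = 1 := by omega
  have hadjall : ∀ x ∈ B, ∀ y ∈ B, x ≠ y → H.Adj x y := by
    intro x hx y hy hxy
    by_contra hadj
    have hind : IsIndep H B {x, y} := by
      refine ⟨?_, ?_⟩
      · intro a ha
        rcases Finset.mem_insert.mp ha with rfl | ha
        · exact hx
        · exact (Finset.mem_singleton.mp ha) ▸ hy
      · intro a ha b hb hab
        have ha' : a = x ∨ a = y := by simpa using ha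
        have hb' : b = x ∨ b = y := by simpa using hb
        rcases ha' with rfl | rfl <;> rcases hb' with rfl | rfl
        · exact absurd rfl hab
        · exact hadj
        · exact fun h => hadj h.symm
        · exact absurd rfl hab
    have := hind.card_le_alph
    rw [Finset.card_insert_of_notMem (by simp [hxy]), Finset.card_singleton] at this
    omega
  by_cases hb3 : 3 ≤ B.card
  · obtain ⟨C, hCB, hC3⟩ := Finset.exists_subset_card_eq hb3
    obtain ⟨x, y, z, hxy, hxz, hyz, hCeq⟩ := Finset.card_eq_three.mp hC3
    have hx : x ∈ B := hCB (hCeq ▸ by simp)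
    have hy : y ∈ B := hCB (hCeq ▸ by simp)
    have hz : z ∈ B := hCB (hCeq ▸ by simp)
    exact cliquefree_helper hH3 (hadjall x hx y hy hxy) (hadjall x hx z hz hxz) hyz
      (hadjall y hy z hz hyz)
  · have hcard2 : B.card = 2 := by omega
    obtain ⟨x, y, hxy, hBeq⟩ := Finset.card_eq_two.mp hcard2
    have hadj : H.Adj x y := hadjall x (hBeq ▸ by simp) y (hBeq ▸ by simp) hxy
    have hpair : IsPairing H B {(x, y)} := by
      refine ⟨fun p hp => ?_, fun p hp q hq hpq => ?_⟩
      · rw [Finset.mem_singleton] at hp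
        subst hp
        exact ⟨hBeq ▸ by simp, hBeq ▸ by simp, hadj⟩
      · rw [Finset.mem_singleton] at hp hq
        exact absurd (hp.trans hq.symm) hpq
    have := hpair.card_le_nu
    simp at this
    omega

theorem main (hH3 : H.CliqueFree 3) : ∀ (n : ℕ) (A : Finset V), A.card = n →
    alph H A + 1 + nu H A ≤ A.card →
    ∀ s t : ℕ, 2 ≤ s → 2 ≤ t → s + t + nu H A = A.card + 1 →
    ∃ S ⊆ A, nu H S + s ≤ S.card ∧ nu H (A \ S) + t ≤ (A \ S).card := by
  intro n
  induction n using Nat.strong_induction_on with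
  | _ n IH =>
  intro A hcard hdef s t hs ht hst
  have h2nu := two_nu_le (H := H) A
  by_cases hd0 : A.card = 2 * nu H A
  · -- perfect-matching case: parity split
    have hsz : 2*s - 1 ≤ A.card := by omega
    obtain ⟨S, hS, hScard⟩ := Finset.exists_subset_card_eq hsz
    have h1 := two_nu_le (H := H) S
    have h2 := two_nu_le (H := H) (A \ S)
    have hTcard : (A \ S).card = A.card - (2*s-1) := by rw [Finset.card_sdiff_of_subset hS, hScard]
    exact ⟨S, hS, by omega, by omega⟩
  · by_cases hd1 : A.card = 2 * nu H A + 1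
    · -- near-perfect case
      have key : ∀ s₁ t₁ : ℕ, 2 ≤ s₁ → s₁ ≤ t₁ → s₁ + t₁ + nu H A = A.card + 1 →
          ∃ S ⊆ A, nu H S + s₁ ≤ S.card ∧ nu H (A \ S) + t₁ ≤ (A \ S).card := by
        intro s₁ t₁ hs₁ hst₁ hsum
        classical
        have hAne : A.Nonempty := Finset.card_pos.mp (by omega)
        obtain ⟨x, hx⟩ := hAne
        have hNxind : IsIndep H A (A.filter (fun y => H.Adj x y)) := by
          refine ⟨Finset.filter_subset _ _, ?_⟩
          intro a ha b hb hab
          rw [Finset.mem_filter] at ha hb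
          exact cliquefree_helper hH3 ha.2 hb.2 hab
        have halphnu : alph H A ≤ nu H A := by omega
        have hdeg : (A.filter (fun y => H.Adj x y)).card ≤ nu H A :=
          le_trans hNxind.card_le_alph halphnu
        have hPcard : 2*s₁ - 3 ≤ ((A.erase x).filter (fun y => ¬H.Adj x y)).card := by
          have hsplit := Finset.card_filter_add_card_filter_not
            (s := A.erase x) (p := fun y => H.Adj x y)
          have hsub : (A.erase x).filter (fun y => H.Adj x y) ⊆ A.filter (fun y => H.Adj x y) := by
            intro y hy
            rw [Finset.mem_filter] at hy ⊢
            exact ⟨Finset.mem_of_mem_erase hy.1, hy.2⟩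
          have hsb := Finset.card_le_card hsub
          have herase : (A.erase x).card = A.card - 1 := Finset.card_erase_of_mem hx
          omega
        obtain ⟨Y, hY, hYcard⟩ := Finset.exists_subset_card_eq hPcard
        have hxY : x ∉ Y := by
          intro h
          exact (Finset.mem_erase.mp (Finset.mem_of_mem_filter _ (hY h))).1 rfl
        have hYnonadj : ∀ y ∈ Y, ¬H.Adj x y := fun y hy =>
          (Finset.mem_filter.mp (hY hy)).2
        have hYA : Y ⊆ A := fun y hy =>
          Finset.mem_of_mem_erase (Finset.mem_of_mem_filter _ (hY hy))
        have hSsub : insert x Y ⊆ A := Finset.insert_subset hx hYA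
        have hScard : (insert x Y).card = 2*s₁ - 2 := by
          rw [Finset.card_insert_of_notMem hxY, hYcard]; omega
        have hSnu : 2 * nu H (insert x Y) ≤ 2*s₁ - 3 := by
          obtain ⟨Ms, hMs, hMsc⟩ := nu_spec (H := H) (insert x Y)
          have hMsY : IsPairing H Y Ms := by
            refine ⟨fun p hp => ?_, hMs.2⟩
            obtain ⟨h1, h2, h3⟩ := hMs.1 p hp
            have hp1 : p.1 ≠ x := by
              intro e
              rcases Finset.mem_insert.mp h2 with e2 | e2
              · exact h3.ne (e.trans e2.symm)
              · exact hYnonadj p.2 e2 (e ▸ h3)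
            have hp2 : p.2 ≠ x := by
              intro e
              rcases Finset.mem_insert.mp h1 with e2 | e2
              · exact h3.ne (e2.trans e.symm)
              · exact hYnonadj p.1 e2 (e ▸ h3.symm)
            exact ⟨Finset.mem_of_mem_insert_of_ne h1 hp1,
              Finset.mem_of_mem_insert_of_ne h2 hp2, h3⟩
          have hsb := Finset.card_le_card hMsY.supp_subset
          rw [hMsY.card_supp] at hsb
          omega
        have hTcard : (A \ insert x Y).card = A.card - (2*s₁-2) := by
          rw [Finset.card_sdiff_of_subset hSsub, hScard]
        have h2T := two_nu_le (H := H) (A \ insert x Y)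
        exact ⟨insert x Y, hSsub, by omega, by omega⟩
      by_cases hstle : s ≤ t
      · exact key s t hs hstle hst
      · obtain ⟨S, hSsub, h1, h2⟩ := key t s ht (by omega) (by omega)
        refine ⟨A \ S, Finset.sdiff_subset, h2, ?_⟩
        rwa [Finset.sdiff_sdiff_eq_self hSsub]
    · -- deficiency at least 2
      by_cases hex : ∃ a ∈ A, nu H (A.erase a) < nu H A
      · obtain ⟨a, haA, halt⟩ := hex
        have hge := nu_le_erase_add_one (H := H) (A := A) a
        have hcarder : (A.erase a).card = A.card - 1 := Finset.card_erase_of_mem haA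
        have hcp : 1 ≤ A.card := Finset.card_pos.mpr ⟨a, haA⟩
        have hdef' : alph H (A.erase a) + 1 + nu H (A.erase a) ≤ (A.erase a).card := by
          have := alph_mono (H := H) (Finset.erase_subset a A)
          omega
        have hst' : s + t + nu H (A.erase a) = (A.erase a).card + 1 := by omega
        have hlt : (A.erase a).card < n := by omega
        obtain ⟨S, hSsub, h1, h2⟩ := IH _ hlt _ rfl hdef' s t hs ht hst'
        have haS : a ∉ S := fun h => (Finset.mem_erase.mp (hSsub h)).1 rfl
        refine ⟨S, hSsub.trans (Finset.erase_subset a A), h1, ?_⟩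
        have hid : A \ S = insert a ((A.erase a) \ S) := by
          ext y
          simp only [Finset.mem_sdiff, Finset.mem_insert, Finset.mem_erase]
          constructor
          · rintro ⟨hyA, hyS⟩
            by_cases hya : y = a
            · exact Or.inl hya
            · exact Or.inr ⟨⟨hya, hyA⟩, hyS⟩
          · rintro (rfl | ⟨⟨hya, hyA⟩, hyS⟩)
            · exact ⟨haA, haS⟩
            · exact ⟨hyA, hyS⟩
        have hanotin : a ∉ (A.erase a) \ S := fun h =>
          (Finset.mem_erase.mp (Finset.mem_sdiff.mp h).1).1 rfl
        have hcrd : (A \ S).card = ((A.erase a) \ S).card + 1 := by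
          rw [hid, Finset.card_insert_of_notMem hanotin]
        have hnuS : nu H (A \ S) ≤ nu H ((A.erase a) \ S) + 1 := by
          rw [hid]; exact nu_insert_le a
        omega
      · push_neg at hex
        have hcal : ∀ x ∈ A, nu H (A.erase x) = nu H A := fun x hx =>
          le_antisymm (nu_mono (Finset.erase_subset x A)) (hex x hx)
        obtain ⟨M, hM, hMc⟩ := nu_spec (H := H) A
        have hmisscard : 2 ≤ (A \ supp M).card := by
          rw [Finset.card_sdiff_of_subset hM.supp_subset, hM.card_supp]
          omega
        obtain ⟨u, hu, v', hv', huv'⟩ := Finset.one_lt_card.mp hmisscard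
        have huA : u ∈ A := (Finset.mem_sdiff.mp hu).1
        have hv'A : v' ∈ A := (Finset.mem_sdiff.mp hv').1
        have hnr : ¬ReachIn H A u v' := by
          intro hr
          exact gallai hcal hM hMc huv' (Finset.mem_sdiff.mp hu).2 (Finset.mem_sdiff.mp hv').2
            huA hv'A hr
        have hsub1 : Rset H A u ⊆ A := Rset_subset
        have hdisj : Disjoint (Rset H A u) (A \ Rset H A u) := Finset.disjoint_sdiff
        have hun : Rset H A u ∪ (A \ Rset H A u) = A := Finset.union_sdiff_of_subset hsub1
        have hsep : Sep H (Rset H A u) (A \ Rset H A u) := sep_Rset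
        have huB1 : u ∈ Rset H A u := self_mem_Rset huA
        have hv'B2 : v' ∈ A \ Rset H A u :=
          Finset.mem_sdiff.mpr ⟨hv'A, fun h => hnr (mem_Rset.mp h).2⟩
        have hlt1 : (Rset H A u).card < n := by
          rw [← hcard]
          have h1 : (A \ Rset H A u).Nonempty := ⟨v', hv'B2⟩
          have h2 := Finset.card_pos.mpr h1
          have h3 : (Rset H A u).card + (A \ Rset H A u).card = A.card := by
            rw [← Finset.card_union_of_disjoint hdisj, hun]
          omega
        have hlt2 : (A \ Rset H A u).card < n := by
          rw [← hcard]
          have h1 : (Rset H A u).Nonempty := ⟨u, huB1⟩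
          have h2 := Finset.card_pos.mpr h1
          have h3 : (Rset H A u).card + (A \ Rset H A u).card = A.card := by
            rw [← Finset.card_union_of_disjoint hdisj, hun]
          omega
        -- a stitching device, applied to whichever side is deficient
        have stitch : ∀ B1 B2 : Finset V, Disjoint B1 B2 → B1 ∪ B2 = A → Sep H B1 B2 →
            alph H B1 + 1 + nu H B1 ≤ B1.card → B1.card < n → B2.card < n →
            ∃ S ⊆ A, nu H S + s ≤ S.card ∧ nu H (A \ S) + t ≤ (A \ S).card := by
          intro B1 B2 hdisj' hun' hsep' hdef1 hlt1' hlt2'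
          have hcal2 : ∀ x ∈ B2, nu H (B2.erase x) = nu H B2 :=
            missable_part hdisj'.symm (by rw [Finset.union_comm]; exact hun') hsep'.symm hcal
          have hnu_add : nu H A = nu H B1 + nu H B2 := by
            rw [← hun']; exact nu_union_sep hdisj' hsep'
          have hcard_add : A.card = B1.card + B2.card := by
            rw [← hun', Finset.card_union_of_disjoint hdisj']
          have h2nu1 := two_nu_le (H := H) B1
          have h2nu2 := two_nu_le (H := H) B2
          have hf13 := deficient_three hH3 hdef1
          obtain ⟨p, hp2, hpf, hps, hspf⟩ :
              ∃ p, 2 ≤ p ∧ p + 1 + nu H B1 ≤ B1.card ∧ p ≤ s ∧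
                s - p + nu H B2 ≤ B2.card := by
            by_cases hc : s ≤ (B2.card - nu H B2) + 2
            · exact ⟨2, by omega, by omega, by omega, by omega⟩
            · exact ⟨s - (B2.card - nu H B2), by omega, by omega, by omega, by omega⟩
          set q := (B1.card - nu H B1) + 1 - p with hqdef
          have hq2 : 2 ≤ q := by omega
          have hpq : p + q + nu H B1 = B1.card + 1 := by omega
          obtain ⟨S1, hS1, hS1a, hS1b⟩ := IH _ hlt1' B1 rfl hdef1 p q hp2 hq2 hpq
          have hv2w2 : (s - p) + ((B2.card - nu H B2) - (s - p)) + nu H B2 = B2.card := by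
            omega
          obtain ⟨S2, hS2, hS2a, hS2b⟩ := main2 B2.card B2 rfl hcal2 (s - p)
            ((B2.card - nu H B2) - (s - p)) hv2w2
          have hdS : Disjoint S1 S2 := hdisj'.mono hS1 hS2
          have hsepS : Sep H S1 S2 := fun a ha b hb => hsep' a (hS1 ha) b (hS2 hb)
          have hnuS := nu_union_sep (H := H) hdS hsepS
          have hdT : Disjoint (B1 \ S1) (B2 \ S2) :=
            hdisj'.mono (Finset.sdiff_subset) (Finset.sdiff_subset)
          have hsepT : Sep H (B1 \ S1) (B2 \ S2) := fun a ha b hb =>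
            hsep' a (Finset.mem_sdiff.mp ha).1 b (Finset.mem_sdiff.mp hb).1
          have hnuT := nu_union_sep (H := H) hdT hsepT
          have hT1c : (B1 \ S1).card = B1.card - S1.card := Finset.card_sdiff_of_subset hS1
          have hT2c : (B2 \ S2).card = B2.card - S2.card := Finset.card_sdiff_of_subset hS2
          have hS1c := Finset.card_le_card hS1
          have hS2c := Finset.card_le_card hS2
          refine ⟨S1 ∪ S2, ?_, ?_, ?_⟩
          · rw [← hun']; exact Finset.union_subset_union hS1 hS2
          · rw [hnuS, Finset.card_union_of_disjoint hdS]
            omega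
          · rw [sdiff_union_split hdisj' hun' hS1 hS2, hnuT,
              Finset.card_union_of_disjoint hdT]
            omega
        by_cases hdef1 : alph H (Rset H A u) + 1 + nu H (Rset H A u) ≤ (Rset H A u).card
        · exact stitch _ _ hdisj hun hsep hdef1 hlt1 hlt2
        · have hαadd := alph_union_sep (H := H) hdisj hsep
          rw [hun] at hαadd
          have hα1 := alph_add_nu_le (H := H) (Rset H A u)
          have hnu_add : nu H A = nu H (Rset H A u) + nu H (A \ Rset H A u) := by
            have h := nu_union_sep (H := H) hdisj hsep
            rwa [hun] at h
          have hcard_add : A.card = (Rset H A u).card + (A \ Rset H A u).card := by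
            have h := Finset.card_union_of_disjoint hdisj
            rw [hun] at h
            omega
          have hdef2 : alph H (A \ Rset H A u) + 1 + nu H (A \ Rset H A u) ≤
              (A \ Rset H A u).card := by omega
          exact stitch _ _ hdisj.symm (by rw [Finset.union_comm]; exact hun) hsep.symm
            hdef2 hlt2 hlt1


-- BEGIN M7 (glue with chromatic numbers)

variable {G : SimpleGraph V}

lemma card_le_color_add_nu (hH3 : (Gᶜ).CliqueFree 3) (S : Finset V) {k : ℕ}
    (C : (G.induce (S : Set V)).Coloring (Fin k)) : S.card ≤ k + nu Gᶜ S := by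
  classical
  have hcards : (Finset.univ : Finset (S : Set V)).card = S.card := by
    rw [Finset.card_univ]
    simp
  have hfib : (Finset.univ : Finset (S : Set V)).card =
      ∑ i : Fin k, (Finset.univ.filter (fun x : (S : Set V) => C x = i)).card :=
    Finset.card_eq_sum_card_fiberwise (fun x _ => Finset.mem_univ _)
  -- each fiber has at most 2 elements
  have hfib2 : ∀ i : Fin k,
      (Finset.univ.filter (fun x : (S : Set V) => C x = i)).card ≤ 2 := by
    intro i
    by_contra h
    push_neg at h
    obtain ⟨a, b, c, ha, hb, hc, hab, hac, hbc⟩ := Finset.two_lt_card_iff.mp h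
    rw [Finset.mem_filter] at ha hb hc
    have hcadj : ∀ x y : (S : Set V), x ≠ y → C x = C y → Gᶜ.Adj x.val y.val := by
      intro x y hxy hcol
      rw [compl_adj]
      refine ⟨fun h => hxy (Subtype.ext h), fun hadj => ?_⟩
      exact C.valid hadj hcol
    exact cliquefree_helper hH3 (hcadj a b hab (ha.2.trans hb.2.symm))
      (hcadj a c hac (ha.2.trans hc.2.symm))
      (fun h => hbc (Subtype.ext h)) (hcadj b c hbc (hb.2.trans hc.2.symm))
  set bigs := Finset.univ.filter
    (fun i : Fin k => 2 ≤ (Finset.univ.filter (fun x : (S : Set V) => C x = i)).card)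
    with hbigs
  have hex : ∀ i ∈ bigs, ∃ a : (S : Set V), ∃ b : (S : Set V),
      a ≠ b ∧ C a = i ∧ C b = i := by
    intro i hi
    rw [hbigs, Finset.mem_filter] at hi
    obtain ⟨a, ha, b, hb, hab⟩ := Finset.one_lt_card.mp hi.2
    rw [Finset.mem_filter] at ha hb
    exact ⟨a, b, hab, ha.2, hb.2⟩
  choose pf1 pf2 hpf1 hpf2 hpf3 using hex
  set M : Finset (V × V) := bigs.attach.image
    (fun i => ((pf1 i.1 i.2).val, (pf2 i.1 i.2).val)) with hMdef
  have hMmem : ∀ p ∈ M, ∃ i : {x // x ∈ bigs},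
      p = ((pf1 i.1 i.2).val, (pf2 i.1 i.2).val) := by
    intro p hp
    rw [hMdef, Finset.mem_image] at hp
    obtain ⟨i, _, hi⟩ := hp
    exact ⟨i, hi.symm⟩
  have hMpair : IsPairing Gᶜ S M := by
    constructor
    · intro p hp
      obtain ⟨i, rfl⟩ := hMmem p hp
      have h1 : ((pf1 i.1 i.2) : V) ∈ S := by
        have := (pf1 i.1 i.2).property
        simpa using this
      have h2 : ((pf2 i.1 i.2) : V) ∈ S := by
        have := (pf2 i.1 i.2).property
        simpa using this
      refine ⟨h1, h2, ?_⟩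
      rw [compl_adj]
      refine ⟨fun h => (hpf1 i.1 i.2) (Subtype.ext h), fun hadj => ?_⟩
      exact C.valid hadj (((hpf2 i.1 i.2)).trans ((hpf3 i.1 i.2)).symm)
    · intro p hp q hq hpq
      obtain ⟨i, rfl⟩ := hMmem p hp
      obtain ⟨j, rfl⟩ := hMmem q hq
      have hij : i ≠ j := fun h => hpq (by rw [h])
      refine ⟨?_, ?_, ?_, ?_⟩ <;> intro heq <;> apply hij <;> apply Subtype.ext
      · have h2 : (pf1 i.1 i.2) = (pf1 j.1 j.2) := Subtype.ext heq
        rw [← hpf2 i.1 i.2, ← hpf2 j.1 j.2, h2]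
      · have h2 : (pf1 i.1 i.2) = (pf2 j.1 j.2) := Subtype.ext heq
        rw [← hpf2 i.1 i.2, ← hpf3 j.1 j.2, h2]
      · have h2 : (pf2 i.1 i.2) = (pf1 j.1 j.2) := Subtype.ext heq
        rw [← hpf3 i.1 i.2, ← hpf2 j.1 j.2, h2]
      · have h2 : (pf2 i.1 i.2) = (pf2 j.1 j.2) := Subtype.ext heq
        rw [← hpf3 i.1 i.2, ← hpf3 j.1 j.2, h2]
  have hMcard : M.card = bigs.card := by
    rw [hMdef]
    rw [Finset.card_image_of_injOn, Finset.card_attach]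
    intro i _ j _ heq
    apply Subtype.ext
    have h1 : (pf1 i.1 i.2).val = (pf1 j.1 j.2).val := congrArg Prod.fst heq
    have h2 : (pf1 i.1 i.2) = (pf1 j.1 j.2) := Subtype.ext h1
    rw [← hpf2 i.1 i.2, ← hpf2 j.1 j.2, h2]
  -- counting
  have hsplit : ∑ i : Fin k, (Finset.univ.filter (fun x : (S : Set V) => C x = i)).card =
      ∑ i ∈ bigs, (Finset.univ.filter (fun x : (S : Set V) => C x = i)).card +
      ∑ i ∈ Finset.univ \ bigs, (Finset.univ.filter (fun x : (S : Set V) => C x = i)).card := by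
    rw [← Finset.sum_union (Finset.disjoint_sdiff)]
    congr 1
    rw [Finset.union_sdiff_of_subset (Finset.subset_univ _)]
  have hbig_bound : ∑ i ∈ bigs, (Finset.univ.filter (fun x : (S : Set V) => C x = i)).card ≤
      2 * bigs.card := by
    calc ∑ i ∈ bigs, (Finset.univ.filter (fun x : (S : Set V) => C x = i)).card
        ≤ ∑ _i ∈ bigs, 2 := Finset.sum_le_sum (fun i _ => hfib2 i)
      _ = 2 * bigs.card := by rw [Finset.sum_const, smul_eq_mul, mul_comm]
  have hsmall_bound : ∑ i ∈ Finset.univ \ bigs,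
      (Finset.univ.filter (fun x : (S : Set V) => C x = i)).card ≤
      (Finset.univ \ bigs).card := by
    calc ∑ i ∈ Finset.univ \ bigs, (Finset.univ.filter (fun x : (S : Set V) => C x = i)).card
        ≤ ∑ _i ∈ Finset.univ \ bigs, 1 := by
          refine Finset.sum_le_sum (fun i hi => ?_)
          rw [Finset.mem_sdiff, hbigs, Finset.mem_filter] at hi
          have h2 := hi.2
          push_neg at h2
          have h3 := h2 (Finset.mem_univ i)
          omega
      _ = (Finset.univ \ bigs).card := by rw [Finset.sum_const, smul_eq_mul, mul_one]
  have hsdcard : (Finset.univ \ bigs).card = k - bigs.card := by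
    rw [Finset.card_sdiff_of_subset (Finset.subset_univ _), Finset.card_univ, Fintype.card_fin]
  have hbigsk : bigs.card ≤ k := by
    calc bigs.card ≤ (Finset.univ : Finset (Fin k)).card :=
          Finset.card_le_card (Finset.subset_univ _)
      _ = k := by rw [Finset.card_univ, Fintype.card_fin]
  have hnuge : bigs.card ≤ nu Gᶜ S := hMcard ▸ hMpair.card_le_nu
  omega

lemma chi_lower (hH3 : (Gᶜ).CliqueFree 3) (S : Finset V) :
    ((S.card - nu Gᶜ S : ℕ) : ℕ∞) ≤ (G.induce (S : Set V)).chromaticNumber := by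
  classical
  have hcol : (G.induce (S : Set V)).Colorable (Fintype.card (S : Set V)) :=
    SimpleGraph.colorable_of_fintype _
  have hne : (G.induce (S : Set V)).chromaticNumber ≠ ⊤ := by
    rw [SimpleGraph.chromaticNumber_ne_top_iff_exists]
    exact ⟨_, hcol⟩
  have hcol2 := SimpleGraph.colorable_of_chromaticNumber_ne_top hne
  obtain ⟨C⟩ := hcol2
  have hcount := card_le_color_add_nu hH3 S C
  rw [← ENat.coe_toNat hne]
  exact_mod_cast (by omega :
    S.card - nu Gᶜ S ≤ ((G.induce (S : Set V)).chromaticNumber).toNat)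

lemma chi_upper : G.chromaticNumber ≤
    ((Fintype.card V - nu Gᶜ Finset.univ : ℕ) : ℕ∞) := by
  classical
  obtain ⟨M, hM, hMc⟩ := nu_spec (H := Gᶜ) (Finset.univ : Finset V)
  set miss := (Finset.univ : Finset V) \ supp M with hmiss
  have hcf : ∀ x : V, x ∉ supp M → x ∈ miss := fun x hx =>
    Finset.mem_sdiff.mpr ⟨Finset.mem_univ x, hx⟩
  have hvalid : ∀ {a b : V}, G.Adj a b →
      (if h : ∃ p ∈ M, a = p.1 ∨ a = p.2
        then (Sum.inl ⟨Classical.choose h, (Classical.choose_spec h).1⟩ : ↥M ⊕ ↥miss)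
        else Sum.inr ⟨a, hcf a (fun hs => h (mem_supp.mp hs))⟩) ≠
      (if h : ∃ p ∈ M, b = p.1 ∨ b = p.2
        then (Sum.inl ⟨Classical.choose h, (Classical.choose_spec h).1⟩ : ↥M ⊕ ↥miss)
        else Sum.inr ⟨b, hcf b (fun hs => h (mem_supp.mp hs))⟩) := by
    intro a b hadj heq
    by_cases ha : ∃ p ∈ M, a = p.1 ∨ a = p.2 <;> by_cases hb : ∃ p ∈ M, b = p.1 ∨ b = p.2
    · rw [dif_pos ha, dif_pos hb] at heq
      simp only [Sum.inl.injEq, Subtype.mk.injEq] at heq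
      have hap := (Classical.choose_spec ha).2
      have hbp := (Classical.choose_spec hb).2
      rw [← heq] at hbp
      have hpM := (Classical.choose_spec ha).1
      have hcadj := (hM.1 (Classical.choose ha) hpM).2.2
      rw [compl_adj] at hcadj
      have hab : a ≠ b := hadj.ne
      rcases hap with h1 | h1 <;> rcases hbp with h2 | h2
      · exact hab (h1.trans h2.symm)
      · exact hcadj.2 (by rw [← h1, ← h2]; exact hadj)
      · exact hcadj.2 (by rw [← h1, ← h2]; exact hadj.symm)
      · exact hab (h1.trans h2.symm)
    · rw [dif_pos ha, dif_neg hb] at heq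
      exact absurd heq (by simp)
    · rw [dif_neg ha, dif_pos hb] at heq
      exact absurd heq (by simp)
    · rw [dif_neg ha, dif_neg hb] at heq
      simp only [Sum.inr.injEq, Subtype.mk.injEq] at heq
      exact hadj.ne heq
  have C : G.Coloring (↥M ⊕ ↥miss) :=
    SimpleGraph.Coloring.mk _ (fun hadj => hvalid hadj)
  have hcolle := C.colorable.chromaticNumber_le
  have hcardeq : Fintype.card (↥M ⊕ ↥miss) = Fintype.card V - nu Gᶜ Finset.univ := by
    rw [Fintype.card_sum, Fintype.card_coe, Fintype.card_coe, hmiss,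
      Finset.card_sdiff_of_subset (Finset.subset_univ _), Finset.card_univ, hM.card_supp, hMc]
    have h2 := two_nu_le (H := Gᶜ) (Finset.univ : Finset V)
    rw [Finset.card_univ] at h2
    omega
  rwa [hcardeq] at hcolle

end ELT

-- BEGIN FINAL

open ELT

/-- The Erdős–Lovász Tihany conjecture for graphs with stability number 2 (Balogh et al.):
if `χ(G) > ω(G)`, `α(G) = 2`, and `s, t ≥ 2` with `s + t = χ(G) + 1`, then `V(G)` partitions
into `S, T` with `χ(G|S) ≥ s` and `χ(G|T) ≥ t`. -/
theorem stmt13 {V : Type*} [Fintype V] (G : SimpleGraph V)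
    (hχω : (G.cliqueNum : ℕ∞) < G.chromaticNumber)
    (hα : Gᶜ.cliqueNum = 2)
    (s t : ℕ) (hs : 2 ≤ s) (ht : 2 ≤ t)
    (hst : ((s + t : ℕ) : ℕ∞) = G.chromaticNumber + 1) :
    ∃ S T : Set V, S ∪ T = Set.univ ∧ Disjoint S T ∧
      (s : ℕ∞) ≤ (G.induce S).chromaticNumber ∧
      (t : ℕ∞) ≤ (G.induce T).chromaticNumber := by
  classical
  have hH3 : (Gᶜ).CliqueFree 3 := by
    intro u hu
    have h1 : u.card ≤ Gᶜ.cliqueNum :=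
      SimpleGraph.IsClique.card_le_cliqueNum (tc := hu.isClique)
    rw [hu.card_eq, hα] at h1
    omega
  have h2nu := two_nu_le (H := Gᶜ) (Finset.univ : Finset V)
  rw [Finset.card_univ] at h2nu
  -- χ(G) = n - ν
  have hiso1 : (G.induce ((Finset.univ : Finset V) : Set V)).chromaticNumber =
      G.chromaticNumber := by
    rw [Finset.coe_univ]
    refine le_antisymm ?_ ?_
    · exact SimpleGraph.chromaticNumber_mono_of_hom (G.induceUnivIso).toHom
    · exact SimpleGraph.chromaticNumber_mono_of_hom (G.induceUnivIso).symm.toHom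
  have hcheq : G.chromaticNumber =
      ((Fintype.card V - nu Gᶜ (Finset.univ : Finset V) : ℕ) : ℕ∞) := by
    refine le_antisymm chi_upper ?_
    rw [← hiso1]
    have hlow := chi_lower hH3 (Finset.univ : Finset V)
    rwa [Finset.card_univ] at hlow
  have hst' : s + t = (Fintype.card V - nu Gᶜ (Finset.univ : Finset V)) + 1 := by
    rw [hcheq] at hst
    have h2 : ((s + t : ℕ) : ℕ∞) =
        (((Fintype.card V - nu Gᶜ (Finset.univ : Finset V)) + 1 : ℕ) : ℕ∞) := by
      rw [hst]
      push_cast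
      rfl
    exact_mod_cast h2
  have hων : G.cliqueNum < Fintype.card V - nu Gᶜ (Finset.univ : Finset V) := by
    rw [hcheq] at hχω
    exact_mod_cast hχω
  have halph : alph Gᶜ (Finset.univ : Finset V) ≤ G.cliqueNum := by
    obtain ⟨I, hI, hIc⟩ := alph_spec (H := Gᶜ) (Finset.univ : Finset V)
    rw [← hIc]
    have hclique : G.IsClique (I : Set V) := by
      intro x hx y hy hxy
      by_contra hnadj
      exact hI.2 x (Finset.mem_coe.mp hx) y (Finset.mem_coe.mp hy) hxy
        ((SimpleGraph.compl_adj G x y).mpr ⟨hxy, hnadj⟩)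
    exact SimpleGraph.IsClique.card_le_cliqueNum (tc := hclique)
  have hdef : alph Gᶜ (Finset.univ : Finset V) + 1 + nu Gᶜ (Finset.univ : Finset V) ≤
      (Finset.univ : Finset V).card := by
    rw [Finset.card_univ]
    omega
  have hstm : s + t + nu Gᶜ (Finset.univ : Finset V) = (Finset.univ : Finset V).card + 1 := by
    rw [Finset.card_univ]
    omega
  obtain ⟨S, hSsub, h1, h2⟩ := main (H := Gᶜ) hH3 (Finset.univ : Finset V).card
    (Finset.univ : Finset V) rfl hdef s t hs ht hstm
  have h2S := two_nu_le (H := Gᶜ) S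
  have h2T := two_nu_le (H := Gᶜ) ((Finset.univ : Finset V) \ S)
  refine ⟨(S : Set V), (((Finset.univ : Finset V) \ S : Finset V) : Set V), ?_, ?_, ?_, ?_⟩
  · ext x
    simp only [Set.mem_union, Finset.coe_sdiff, Finset.coe_univ, Set.mem_diff,
      Set.mem_univ, true_and, Finset.mem_coe, Set.mem_setOf_eq, iff_true]
    tauto
  · rw [Finset.disjoint_coe]
    exact Finset.disjoint_sdiff
  · refine le_trans ?_ (chi_lower hH3 S)
    exact_mod_cast (by omega : s ≤ S.card - nu Gᶜ S)
  · refine le_trans ?_ (chi_lower hH3 ((Finset.univ : Finset V) \ S))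
    exact_mod_cast (by omega :
      t ≤ ((Finset.univ : Finset V) \ S).card - nu Gᶜ ((Finset.univ : Finset V) \ S))
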